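/- arXiv:2311.09924 — 3 statements merged into one kernel-verified Lean document; each statement's English description precedes it below -/
import Mathlib

section
/- Let G be a group, I the augmentation ideal of Q[G], and F: Q[G] → Q a linear map vanishing on I^3 with F(1) = 0. Define C(a,b) = F(a) + F(b) − F(ab). Then C is linear in the second variable: C(a, bc) = C(a,b) + C(a,c) for all a, b, c in G. -/
/-- Same setting; `C` is linear in the second variable. -/
theorem stmt_1 (G : Type*) [Group G]
    (I : Ideal (MonoidAlgebra ℚ G))
    (hI : I = RingHom.ker (MonoidAlgebra.lift ℚ ℚ G (1 : G →* ℚ)))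
    (F : MonoidAlgebra ℚ G →ₗ[ℚ] ℚ)
    (hF3 : ∀ x ∈ I ^ 3, F x = 0)
    (hF1 : F 1 = 0)
    (C : G → G → ℚ)
    (hC : ∀ a b : G, C a b =
      F (MonoidAlgebra.of ℚ G a) + F (MonoidAlgebra.of ℚ G b)
        - F (MonoidAlgebra.of ℚ G (a * b)))
    (a b c : G) :
    C a (b * c) = C a b + C a c := by
  have hmem : ∀ g : G, (MonoidAlgebra.of ℚ G g - 1) ∈ I := by
    intro g
    rw [hI, RingHom.mem_ker]
    simp [MonoidAlgebra.lift_of]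
  set x := MonoidAlgebra.of ℚ G a with hxdef
  set y := MonoidAlgebra.of ℚ G b with hydef
  set z := MonoidAlgebra.of ℚ G c with hzdef
  have hprod : (x - 1) * (y - 1) * (z - 1) ∈ I ^ 3 := by
    rw [show (3:ℕ)=2+1 from rfl, Submodule.pow_succ, show (2:ℕ)=1+1 from rfl, Submodule.pow_succ, Submodule.pow_one]
    exact Submodule.mul_mem_mul (Submodule.mul_mem_mul (hmem a) (hmem b)) (hmem c)
  have h0 := hF3 _ hprod
  have hexp : (x - 1) * (y - 1) * (z - 1)
      = x * y * z - x * y - x * z - y * z + x + y + z - 1 := by noncomm_ring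
  rw [hexp] at h0
  simp only [map_sub, map_add, hF1] at h0
  rw [hC, hC, hC]
  simp only [map_mul, ← hxdef, ← hydef, ← hzdef, ← mul_assoc]
  linarith
end

section
/- Let G be a group and g ∈ G, n ≥ 1. Then g − 1 lies in the n-th power of the augmentation ideal I of Q[G] if g lies in the n-th term of the lower central series of G. (In particular, if g ∈ [G,G] then g − 1 ∈ I².) -/
/-- Positive powers of an ideal commute with the ideal itself (as submodules). -/
theorem ideal_mul_pow_comm {R : Type*} [Semiring R] (I : Ideal R) :
    ∀ m : ℕ, I * I ^ (m + 1) = I ^ (m + 1) * I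
  | 0 => by rw [Submodule.pow_succ, Submodule.pow_zero, Submodule.one_mul]
  | m + 1 => by
      rw [Submodule.pow_succ (n := m + 1), ← mul_assoc, ideal_mul_pow_comm I m]

open MonoidAlgebra in
/-- The set of group elements `g` with `of g - 1 ∈ J` is a subgroup. -/
noncomputable def augSubgroup {G : Type*} [Group G] (J : Ideal (MonoidAlgebra ℚ G)) :
    Subgroup G where
  carrier := {g | of ℚ G g - 1 ∈ J}
  one_mem' := by
    show of ℚ G 1 - 1 ∈ J
    rw [map_one, sub_self]
    exact J.zero_mem
  mul_mem' := by
    intro a b ha hb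
    have h : of ℚ G (a * b) - 1 = of ℚ G a * (of ℚ G b - 1) + (of ℚ G a - 1) := by
      rw [map_mul]; noncomm_ring
    show of ℚ G (a * b) - 1 ∈ J
    rw [h]
    exact J.add_mem (J.mul_mem_left _ hb) ha
  inv_mem' := by
    intro a ha
    have hu : of ℚ G a⁻¹ * of ℚ G a = 1 := by rw [← map_mul, inv_mul_cancel, map_one]
    have h : of ℚ G a⁻¹ - 1 = -(of ℚ G a⁻¹ * (of ℚ G a - 1)) := by
      rw [mul_sub, hu, mul_one]; noncomm_ring
    show of ℚ G a⁻¹ - 1 ∈ J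
    rw [h]
    exact J.neg_mem (J.mul_mem_left _ ha)

/-- if `g` lies in the `n`-th term of the lower central series of `G`
(numbered so that `G(1) = G`, i.e. `lowerCentralSeries G (n-1)`), then `g - 1` lies
in the `n`-th power of the augmentation ideal of `ℚ[G]`. -/
theorem stmt_2 (G : Type*) [Group G]
    (I : Ideal (MonoidAlgebra ℚ G))
    (hI : I = RingHom.ker (MonoidAlgebra.lift ℚ ℚ G (1 : G →* ℚ)))
    (n : ℕ) (hn : 1 ≤ n) (g : G)
    (hg : g ∈ (⊤ : Subgroup G).lowerCentralSeries (n - 1)) :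
    MonoidAlgebra.of ℚ G g - 1 ∈ I ^ n := by
  have base : ∀ x : G, MonoidAlgebra.of ℚ G x - 1 ∈ I := by
    intro x
    rw [hI, RingHom.mem_ker]
    have h1 : (MonoidAlgebra.lift ℚ ℚ G (1 : G →* ℚ)) (MonoidAlgebra.of ℚ G x) = 1 := by
      simp [MonoidAlgebra.lift_of]
    rw [map_sub, h1, map_one, sub_self]
  have key : ∀ k : ℕ, (⊤ : Subgroup G).lowerCentralSeries k ≤ augSubgroup (I ^ (k + 1)) := by
    intro k
    induction k with
    | zero =>
      intro x _
      show MonoidAlgebra.of ℚ G x - 1 ∈ I ^ (0 + 1)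
      rw [zero_add, Submodule.pow_one]
      exact base x
    | succ k ih =>
      rw [Subgroup.lowerCentralSeries_succ, Subgroup.commutator_def, Subgroup.closure_le]
      rintro x ⟨p, hp, q, -, rfl⟩
      show MonoidAlgebra.of ℚ G (p * q * p⁻¹ * q⁻¹) - 1 ∈ I ^ (k + 1 + 1)
      have hP : MonoidAlgebra.of ℚ G p⁻¹ - 1 ∈ I ^ (k + 1) :=
        ih (((⊤ : Subgroup G).lowerCentralSeries k).inv_mem hp)
      have hQ : MonoidAlgebra.of ℚ G q⁻¹ - 1 ∈ I := base q⁻¹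
      have hdiff : MonoidAlgebra.of ℚ G (p⁻¹ * q⁻¹) - MonoidAlgebra.of ℚ G (q⁻¹ * p⁻¹) =
          (MonoidAlgebra.of ℚ G p⁻¹ - 1) * (MonoidAlgebra.of ℚ G q⁻¹ - 1) -
          (MonoidAlgebra.of ℚ G q⁻¹ - 1) * (MonoidAlgebra.of ℚ G p⁻¹ - 1) := by
        rw [map_mul, map_mul]; noncomm_ring
      have hmem : MonoidAlgebra.of ℚ G (p⁻¹ * q⁻¹) - MonoidAlgebra.of ℚ G (q⁻¹ * p⁻¹) ∈
          I ^ (k + 1 + 1) := by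
        rw [hdiff]
        refine Ideal.sub_mem _ ?_ ?_
        · rw [Submodule.pow_succ]
          exact Submodule.mul_mem_mul hP hQ
        · rw [Submodule.pow_succ, ← ideal_mul_pow_comm]
          exact Submodule.mul_mem_mul hQ hP
      have heq : MonoidAlgebra.of ℚ G (p * q * p⁻¹ * q⁻¹) - 1 =
          MonoidAlgebra.of ℚ G (p * q) *
          (MonoidAlgebra.of ℚ G (p⁻¹ * q⁻¹) - MonoidAlgebra.of ℚ G (q⁻¹ * p⁻¹)) := by
        rw [mul_sub, ← map_mul, ← map_mul]
        congr 1
        · congr 1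
          group
        · rw [show p * q * (q⁻¹ * p⁻¹) = 1 by group, map_one]
      rw [heq]
      exact Ideal.mul_mem_left _ _ hmem
  have := key (n - 1) hg
  rwa [Nat.sub_add_cancel hn] at this
end

section
/- With H = A ⊕ B of dimension 2g over Q and the diagonal GL_g(Z)-action as above, assume n < g. Then in (H^{⊗2n})_{GL_g(Z)}, every basic tensor in which the basis vector a₁ appears p times (p > 0) and b₁ appears 0 times is equal to zero. -/
open scoped TensorProduct

/-- `H = A ⊕ B`, `A = B = ℚ^g`. -/
abbrev HSp (g : ℕ) : Type := (Fin g → ℚ) × (Fin g → ℚ)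

/-- basis vectors `a_i` -/
def ea {g : ℕ} (i : Fin g) : HSp g := (Pi.single i 1, 0)

/-- basis vectors `b_i` -/
def eb {g : ℕ} (i : Fin g) : HSp g := (0, Pi.single i 1)

/-- The diagonal action of `GL_g(ℤ)` on `H`: standardly on the `a`-part, by
inverse-transpose on the `b`-part. -/
noncomputable def glAct {g : ℕ} (M : GL (Fin g) ℤ) : HSp g →ₗ[ℚ] HSp g :=
  LinearMap.prodMap
    (Matrix.toLin' ((M : Matrix (Fin g) (Fin g) ℤ).map (Int.cast : ℤ → ℚ)))
    (Matrix.toLin' (((M⁻¹ : GL (Fin g) ℤ) : Matrix (Fin g) (Fin g) ℤ).transpose.map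
      (Int.cast : ℤ → ℚ)))

/-- The subspace of `H^{⊗2n}` generated by `v - M·v`, whose quotient is the
coinvariants `(H^{⊗2n})_{GL_g(ℤ)}`. -/
noncomputable def coinvRel (g n : ℕ) :
    Submodule ℚ (PiTensorProduct ℚ (fun _ : Fin (2 * n) => HSp g)) :=
  Submodule.span ℚ
    {x | ∃ (M : GL (Fin g) ℤ) (v : PiTensorProduct ℚ (fun _ : Fin (2 * n) => HSp g)),
      x = v - PiTensorProduct.map (fun _ => glAct M) v}

section Aux

variable {g : ℕ}

lemma ea_inj {i j : Fin g} (h : ea i = ea j) : i = j := by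
  by_contra hij
  have := congrFun (congrArg Prod.fst h) i
  simp [ea, Pi.single_apply, hij, eq_comm] at this

lemma eb_inj {i j : Fin g} (h : eb i = eb j) : i = j := by
  by_contra hij
  have := congrFun (congrArg Prod.snd h) i
  simp [eb, Pi.single_apply, hij, eq_comm] at this

lemma ea_ne_eb (i j : Fin g) : ea i ≠ eb j := by
  intro h
  have := congrFun (congrArg Prod.fst h) i
  simp [ea, eb] at this

lemma glAct_ea (M : GL (Fin g) ℤ) (i : Fin g) :
    glAct M (ea i) = (fun r => (((M : Matrix (Fin g) (Fin g) ℤ) r i : ℤ) : ℚ), 0) := by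
  simp only [glAct, ea, LinearMap.prodMap_apply, Matrix.toLin'_apply]
  refine Prod.ext ?_ ?_
  · simp [Matrix.mulVec_single, Matrix.map_apply]
    rfl
  · simp

lemma glAct_eb (M : GL (Fin g) ℤ) (j : Fin g) :
    glAct M (eb j) =
      (0, fun r => ((((M⁻¹ : GL (Fin g) ℤ) : Matrix (Fin g) (Fin g) ℤ) j r : ℤ) : ℚ)) := by
  simp only [glAct, eb, LinearMap.prodMap_apply, Matrix.toLin'_apply]
  refine Prod.ext ?_ ?_
  · simp
  · simp [Matrix.mulVec_single, Matrix.map_apply, Matrix.transpose_apply]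
    rfl

/-- the sign matrix with `-1` in slot `s` -/
def dMatM (s : Fin g) : Matrix (Fin g) (Fin g) ℤ :=
  Matrix.diagonal (fun i => if i = s then -1 else 1)

lemma dMatM_def (s : Fin g) :
    dMatM s = Matrix.diagonal (fun i => if i = s then -1 else 1) := rfl

lemma dMatM_mul_self (s : Fin g) : dMatM s * dMatM s = 1 := by
  rw [dMatM, Matrix.diagonal_mul_diagonal]
  ext i j
  by_cases h : i = s <;> by_cases h2 : i = j <;>
    simp [Matrix.diagonal_apply, Matrix.one_apply, h, h2] <;> simp [← h2, h]

def dMat (s : Fin g) : GL (Fin g) ℤ :=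
  ⟨dMatM s, dMatM s, dMatM_mul_self s, dMatM_mul_self s⟩

lemma nMat_mul (e0 s : Fin g) (hs : s ≠ e0) (t : ℤ) :
    (1 + Matrix.single e0 s t) * (1 - Matrix.single e0 s t) = 1 := by
  have h0 : Matrix.single e0 s t * Matrix.single e0 s t = 0 :=
    Matrix.single_mul_single_of_ne (c := t) e0 s e0 hs t
  rw [mul_sub, add_mul, add_mul]
  simp [h0]

lemma nMat_mul' (e0 s : Fin g) (hs : s ≠ e0) (t : ℤ) :
    (1 - Matrix.single e0 s t) * (1 + Matrix.single e0 s t) = 1 := by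
  have h0 : Matrix.single e0 s t * Matrix.single e0 s t = 0 :=
    Matrix.single_mul_single_of_ne (c := t) e0 s e0 hs t
  rw [mul_add, sub_mul, sub_mul]
  simp [h0]

/-- the elementary transvection `1 + t E_{e0,s}` -/
def nMat (e0 s : Fin g) (hs : s ≠ e0) (t : ℤ) : GL (Fin g) ℤ :=
  ⟨1 + Matrix.single e0 s t, 1 - Matrix.single e0 s t,
    nMat_mul e0 s hs t, nMat_mul' e0 s hs t⟩

lemma glAct_dMat_ea (s i : Fin g) :
    glAct (dMat s) (ea i) = (if i = s then (-1:ℚ) else 1) • ea i := by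
  rw [glAct_ea]
  have hc : ((dMat s : GL (Fin g) ℤ) : Matrix (Fin g) (Fin g) ℤ) = dMatM s := rfl
  refine Prod.ext ?_ ?_
  · funext r
    simp only [hc, dMatM_def, Matrix.diagonal_apply, ea, Prod.smul_fst, Prod.fst, Pi.smul_apply,
      Pi.single_apply, smul_eq_mul]
    by_cases h : r = i
    · subst h
      by_cases h2 : r = s <;> simp [h2]
    · by_cases h2 : i = s
      · subst h2
        simp [h, Ne.symm h]
      · simp [h, h2, Ne.symm h]
  · by_cases h2 : i = s <;> simp [ea, h2]

lemma glAct_dMat_eb (s j : Fin g) :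
    glAct (dMat s) (eb j) = (if j = s then (-1:ℚ) else 1) • eb j := by
  rw [glAct_eb]
  have hc : (((dMat s)⁻¹ : GL (Fin g) ℤ) : Matrix (Fin g) (Fin g) ℤ) = dMatM s := rfl
  refine Prod.ext ?_ ?_
  · by_cases h2 : j = s <;> simp [eb, h2]
  · funext r
    simp only [hc, dMatM_def, Matrix.diagonal_apply, eb, Prod.smul_snd, Prod.snd, Pi.smul_apply,
      Pi.single_apply, smul_eq_mul]
    by_cases h : j = r
    · subst h
      by_cases h2 : j = s <;> simp [h2]
    · by_cases h2 : j = s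
      · subst h2
        simp [h, Ne.symm h]
      · simp [h, h2, Ne.symm h]

lemma glAct_nMat_ea_s (e0 s : Fin g) (hs : s ≠ e0) (t : ℤ) :
    glAct (nMat e0 s hs t) (ea s) = ea s + (t:ℚ) • ea e0 := by
  rw [glAct_ea]
  have hc : ((nMat e0 s hs t : GL (Fin g) ℤ) : Matrix (Fin g) (Fin g) ℤ)
      = 1 + Matrix.single e0 s t := rfl
  refine Prod.ext ?_ ?_
  · funext r
    simp only [hc, Matrix.add_apply, Matrix.one_apply, Matrix.single, Matrix.of_apply,
      ea, Prod.fst, Pi.add_apply, Pi.smul_apply, Pi.single_apply, smul_eq_mul]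
    by_cases h : r = s
    · subst h
      have h2 : ¬ (e0 = r) := fun hh => hs hh.symm
      simp [h2]
    · by_cases h2 : r = e0
      · subst h2
        simp [h, Ne.symm h]
      · simp [h, Ne.symm h, h2, Ne.symm h2]
  · simp [ea]

lemma glAct_nMat_ea (e0 s : Fin g) (hs : s ≠ e0) (t : ℤ) (i : Fin g) (hi : i ≠ s) :
    glAct (nMat e0 s hs t) (ea i) = ea i := by
  rw [glAct_ea]
  have hc : ((nMat e0 s hs t : GL (Fin g) ℤ) : Matrix (Fin g) (Fin g) ℤ)
      = 1 + Matrix.single e0 s t := rfl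
  refine Prod.ext ?_ ?_
  · funext r
    simp only [hc, Matrix.add_apply, Matrix.one_apply, Matrix.single, Matrix.of_apply,
      ea, Prod.fst, Pi.single_apply]
    by_cases h : r = i <;> simp [h, hi.symm, Ne.symm hi, eq_comm]
  · simp [ea]

lemma glAct_nMat_eb (e0 s : Fin g) (hs : s ≠ e0) (t : ℤ) (j : Fin g) (hj : j ≠ e0) :
    glAct (nMat e0 s hs t) (eb j) = eb j := by
  rw [glAct_eb]
  have hc : (((nMat e0 s hs t)⁻¹ : GL (Fin g) ℤ) : Matrix (Fin g) (Fin g) ℤ)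
      = 1 - Matrix.single e0 s t := rfl
  refine Prod.ext ?_ ?_
  · simp [eb]
  · funext r
    simp only [hc, Matrix.sub_apply, Matrix.one_apply, Matrix.single, Matrix.of_apply,
      eb, Prod.snd, Pi.single_apply]
    have hj' : ¬ (e0 = j) := fun hh => hj hh.symm
    by_cases h : j = r
    · subst h
      simp [hj']
    · simp [h, Ne.symm h, hj']

lemma vander_mem {V : Type*} [AddCommGroup V] [Module ℚ V] (R : Submodule ℚ V) (p : ℕ)
    (u : Fin p → V)
    (h : ∀ t : Fin p, (∑ k : Fin p, (((t : ℕ) : ℚ) + 1) ^ ((k : ℕ) + 1) • u k) ∈ R) :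
    ∀ k, u k ∈ R := by
  classical
  set B : Matrix (Fin p) (Fin p) ℚ :=
    Matrix.of fun t k : Fin p => (((t : ℕ) : ℚ) + 1) ^ ((k : ℕ) + 1) with hB
  have hBd : B = Matrix.diagonal (fun t : Fin p => ((t : ℕ) : ℚ) + 1) *
      Matrix.vandermonde (fun t : Fin p => ((t : ℕ) : ℚ) + 1) := by
    ext t k
    simp [hB, Matrix.mul_apply, Matrix.diagonal_apply, Matrix.vandermonde,
      Finset.sum_ite_eq, pow_succ]
    ring
  have hdet : IsUnit B.det := by
    rw [hBd, Matrix.det_mul, Matrix.det_diagonal]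
    refine (IsUnit.mul ?_ ?_)
    · refine isUnit_iff_ne_zero.2 (Finset.prod_ne_zero_iff.2 fun t _ => ?_)
      positivity
    · refine isUnit_iff_ne_zero.2 (Matrix.det_vandermonde_ne_zero_iff.2 ?_)
      intro a b hab
      simp only at hab
      have : ((a : ℕ) : ℚ) = ((b : ℕ) : ℚ) := by linarith
      exact Fin.ext (by exact_mod_cast this)
  have hinv : B⁻¹ * B = 1 := Matrix.nonsing_inv_mul B hdet
  intro k
  have key : u k = ∑ t : Fin p, B⁻¹ k t • ∑ j : Fin p, B t j • u j := by
    simp_rw [Finset.smul_sum, smul_smul]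
    rw [Finset.sum_comm]
    simp_rw [← Finset.sum_smul, ← Matrix.mul_apply, hinv]
    simp [Matrix.one_apply]
  rw [key]
  exact Submodule.sum_mem _ fun t _ => Submodule.smul_mem _ _ (h t)

lemma expand_tprod {g n : ℕ} (L : HSp g →ₗ[ℚ] HSp g) (c d : Fin (2*n) → HSp g) (t : ℚ)
    (h : ∀ k, L (c k) = c k + t • d k) :
    PiTensorProduct.map (fun _ : Fin (2*n) => L) (PiTensorProduct.tprod ℚ c)
      = ∑ S : Finset (Fin (2*n)),
          t ^ S.card • PiTensorProduct.tprod ℚ (S.piecewise d c) := by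
  rw [PiTensorProduct.map_tprod]
  have h2 : (fun k => L (c k)) = (fun k => t • d k) + c := by
    funext k
    simp [h k, add_comm]
  rw [h2, MultilinearMap.map_add_univ]
  refine Finset.sum_congr rfl fun S _ => ?_
  have h3 : S.piecewise (fun k => t • d k) c
      = fun k => (if k ∈ S then t else 1) • (S.piecewise d c k) := by
    funext k
    by_cases hk : k ∈ S <;> simp [Finset.piecewise, hk]
  rw [h3, MultilinearMap.map_smul_univ]
  congr 1
  rw [Finset.prod_ite, Finset.prod_const, Finset.prod_const, one_pow, mul_one]
  congr 1
  simp [Finset.filter_mem_eq_inter]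

lemma cond_ea {i s : Fin g} : (ea i = ea s ∨ ea i = eb s) ↔ i = s := by
  constructor
  · rintro (h | h)
    · exact ea_inj h
    · exact absurd h (ea_ne_eb _ _)
  · rintro rfl
    exact Or.inl rfl

lemma cond_eb {i s : Fin g} : (eb i = ea s ∨ eb i = eb s) ↔ i = s := by
  constructor
  · rintro (h | h)
    · exact absurd h.symm (ea_ne_eb _ _)
    · exact eb_inj h
  · rintro rfl
    exact Or.inr rfl

end Aux

/-- assume `n < g`. A basic tensor in which `a₁` appears `p > 0` times
and `b₁` appears `0` times is zero in the coinvariants quotient. -/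
theorem stmt_6 (g n : ℕ) (hng : n < g) (f : Fin (2 * n) → HSp g)
    (hbasic : ∀ k, (∃ i, f k = ea i) ∨ (∃ i, f k = eb i))
    (hp : 0 < (Finset.univ.filter fun k => f k = ea (⟨0, by omega⟩ : Fin g)).card)
    (hq : (Finset.univ.filter fun k => f k = eb (⟨0, by omega⟩ : Fin g)).card = 0) :
    PiTensorProduct.tprod ℚ f ∈ coinvRel g n := by
  have hg0 : 0 < g := by omega
  set e0 : Fin g := ⟨0, hg0⟩ with he0
  by_cases hodd :
      ∃ s : Fin g, Odd ((Finset.univ.filter fun k => f k = ea s ∨ f k = eb s).card)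
  -- Case A : some index has odd total multiplicity; use the sign matrix.
  · obtain ⟨s, hs⟩ := hodd
    have hrel : PiTensorProduct.tprod ℚ f -
        PiTensorProduct.map (fun _ => glAct (dMat s)) (PiTensorProduct.tprod ℚ f)
        ∈ coinvRel g n :=
      Submodule.subset_span ⟨dMat s, PiTensorProduct.tprod ℚ f, rfl⟩
    have hmap : PiTensorProduct.map (fun _ => glAct (dMat s)) (PiTensorProduct.tprod ℚ f)
        = -(PiTensorProduct.tprod ℚ f) := by
      rw [PiTensorProduct.map_tprod]
      have hfk : (fun k => glAct (dMat s) (f k))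
          = fun k => (if f k = ea s ∨ f k = eb s then (-1:ℚ) else 1) • f k := by
        funext k
        rcases hbasic k with ⟨i, hi⟩ | ⟨i, hi⟩
        · rw [hi, glAct_dMat_ea]
          simp only [cond_ea]
        · rw [hi, glAct_dMat_eb]
          simp only [cond_eb]
      rw [hfk, MultilinearMap.map_smul_univ, Finset.prod_ite, Finset.prod_const,
        Finset.prod_const, one_pow, mul_one, hs.neg_one_pow, neg_smul, one_smul]
    rw [hmap, sub_neg_eq_add] at hrel
    have h2 : PiTensorProduct.tprod ℚ f =
        (2⁻¹ : ℚ) • (PiTensorProduct.tprod ℚ f + PiTensorProduct.tprod ℚ f) := by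
      rw [← two_smul ℚ, smul_smul]
      norm_num
    rw [h2]
    exact Submodule.smul_mem _ _ hrel
  -- Case B : all multiplicities even.
  · push_neg at hodd
    have heven : ∀ s : Fin g,
        Even ((Finset.univ.filter fun k => f k = ea s ∨ f k = eb s).card) :=
      fun s => Nat.not_odd_iff_even.1 (hodd s)
    have hnb : ∀ k, f k ≠ eb e0 := by
      intro k hk
      have hmem : k ∈ Finset.univ.filter fun k => f k = eb e0 := by
        simp [hk]
      rw [Finset.card_eq_zero] at hq
      rw [hq] at hmem
      exact absurd hmem (Finset.notMem_empty k)
    obtain ⟨s, hsfresh⟩ : ∃ s : Fin g,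
        (Finset.univ.filter fun k => f k = ea s ∨ f k = eb s).card = 0 := by
      by_contra hcon
      push_neg at hcon
      have hidx : ∀ k : Fin (2*n), ∃ i, f k = ea i ∨ f k = eb i := by
        intro k
        rcases hbasic k with ⟨i, hi⟩ | ⟨i, hi⟩
        exacts [⟨i, Or.inl hi⟩, ⟨i, Or.inr hi⟩]
      choose idx hidx2 using hidx
      have hcount : (Finset.univ : Finset (Fin (2*n))).card
          = ∑ s : Fin g, ((Finset.univ : Finset (Fin (2*n))).filter
              fun k => idx k = s).card :=
        Finset.card_eq_sum_card_fiberwise (fun x _ => Finset.mem_univ _)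
      have hfil : ∀ s : Fin g, ((Finset.univ : Finset (Fin (2*n))).filter
            fun k => idx k = s)
          = (Finset.univ.filter fun k => f k = ea s ∨ f k = eb s) := by
        intro s
        ext k
        simp only [Finset.mem_filter, Finset.mem_univ, true_and]
        constructor
        · rintro rfl
          exact hidx2 k
        · rintro (h | h)
          · rcases hidx2 k with h2 | h2
            · exact ea_inj (h2.symm.trans h)
            · exact absurd (h2.symm.trans h).symm (ea_ne_eb _ _)
          · rcases hidx2 k with h2 | h2
            · exact absurd (h2.symm.trans h) (ea_ne_eb _ _)
            · exact eb_inj (h2.symm.trans h)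
      have hge : ∀ s : Fin g,
          2 ≤ (Finset.univ.filter fun k => f k = ea s ∨ f k = eb s).card := by
        intro s
        obtain ⟨c0, hc0⟩ := heven s
        have := hcon s
        omega
      have h2g : 2 * g ≤ 2 * n := by
        calc 2 * g = ∑ _s : Fin g, 2 := by simp [Finset.card_univ, mul_comm]
        _ ≤ ∑ s : Fin g, (Finset.univ.filter fun k => f k = ea s ∨ f k = eb s).card :=
            Finset.sum_le_sum fun s _ => hge s
        _ = (Finset.univ : Finset (Fin (2*n))).card := by
            rw [hcount]
            exact Finset.sum_congr rfl fun s _ => by rw [hfil s]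
        _ = 2 * n := by simp
      omega
    have hfresh : ∀ k, f k ≠ ea s ∧ f k ≠ eb s := by
      intro k
      rw [Finset.card_eq_zero] at hsfresh
      constructor <;> intro hk
      · have : k ∈ Finset.univ.filter fun k => f k = ea s ∨ f k = eb s := by
          simp [hk]
        rw [hsfresh] at this
        exact absurd this (Finset.notMem_empty k)
      · have : k ∈ Finset.univ.filter fun k => f k = ea s ∨ f k = eb s := by
          simp [hk]
        rw [hsfresh] at this
        exact absurd this (Finset.notMem_empty k)
    have hse0 : s ≠ e0 := by
      intro h
      subst h
      obtain ⟨k, hk⟩ := Finset.card_pos.1 hp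
      exact (hfresh k).1 (Finset.mem_filter.1 hk).2
    set P : Finset (Fin (2*n)) := Finset.univ.filter (fun k => f k = ea e0) with hPdef
    have hp0 : 0 < P.card := hp
    set c : Fin (2*n) → HSp g := fun k => if f k = ea e0 then ea s else f k with hcdef
    set d : Fin (2*n) → HSp g := fun k => if f k = ea e0 then ea e0 else 0 with hddef
    set y : Finset (Fin (2*n)) → PiTensorProduct ℚ (fun _ : Fin (2*n) => HSp g) :=
      fun S => PiTensorProduct.tprod ℚ (S.piecewise d c) with hydef
    set u : ℕ → PiTensorProduct ℚ (fun _ : Fin (2*n) => HSp g) :=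
      fun j => ∑ S ∈ Finset.powersetCard j P, y S with hudef
    have hstep : ∀ t : ℤ,
        PiTensorProduct.map (fun _ => glAct (nMat e0 s hse0 t)) (PiTensorProduct.tprod ℚ c)
          = ∑ j ∈ Finset.range (P.card + 1), ((t:ℚ)) ^ j • u j := by
      intro t
      have hact : ∀ k, glAct (nMat e0 s hse0 t) (c k) = c k + (t:ℚ) • d k := by
        intro k
        by_cases hk : f k = ea e0
        · simp only [hcdef, hddef, hk, if_pos]
          exact glAct_nMat_ea_s e0 s hse0 t
        · simp only [hcdef, hddef, hk, if_neg, ite_false, smul_zero, add_zero]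
          rcases hbasic k with ⟨i, hi⟩ | ⟨i, hi⟩
          · rw [hi]
            refine glAct_nMat_ea e0 s hse0 t i fun h => (hfresh k).1 ?_
            rw [hi, h]
          · rw [hi]
            refine glAct_nMat_eb e0 s hse0 t i fun h => hnb k ?_
            rw [hi, h]
      rw [expand_tprod _ c d (t:ℚ) hact]
      rw [← Finset.sum_subset (Finset.subset_univ P.powerset) ?_]
      · rw [Finset.sum_powerset]
        refine Finset.sum_congr rfl fun j _ => ?_
        rw [hudef, Finset.smul_sum]
        refine Finset.sum_congr rfl fun S hS => ?_
        rw [(Finset.mem_powersetCard.1 hS).2]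
      · intro S _ hS
        obtain ⟨k, hkS, hkP⟩ := Finset.not_subset.1 fun hsub =>
          hS (Finset.mem_powerset.2 hsub)
        have hdk : (S.piecewise d c) k = 0 := by
          rw [Finset.piecewise_eq_of_mem _ _ _ hkS]
          have : ¬ f k = ea e0 := fun h => hkP (Finset.mem_filter.2 ⟨Finset.mem_univ _, h⟩)
          simp [hddef, this]
        rw [(PiTensorProduct.tprod ℚ).map_coord_zero k hdk, smul_zero]
    have hrel : ∀ t : ℤ,
        (∑ j ∈ Finset.range P.card, ((t:ℚ)) ^ (j+1) • u (j+1)) ∈ coinvRel g n := by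
      intro t
      have h0 : PiTensorProduct.tprod ℚ c -
          PiTensorProduct.map (fun _ => glAct (nMat e0 s hse0 t)) (PiTensorProduct.tprod ℚ c)
          ∈ coinvRel g n :=
        Submodule.subset_span ⟨nMat e0 s hse0 t, PiTensorProduct.tprod ℚ c, rfl⟩
      rw [hstep t, Finset.sum_range_succ'] at h0
      have hu0 : u 0 = PiTensorProduct.tprod ℚ c := by
        simp only [hudef, Finset.powersetCard_zero, Finset.sum_singleton, hydef,
          Finset.piecewise_empty]
      rw [hu0, pow_zero, one_smul] at h0
      have heq : PiTensorProduct.tprod ℚ c -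
          ((∑ j ∈ Finset.range P.card, ((t:ℚ)) ^ (j+1) • u (j+1)) + PiTensorProduct.tprod ℚ c)
          = -(∑ j ∈ Finset.range P.card, ((t:ℚ)) ^ (j+1) • u (j+1)) := by
        abel
      rw [heq] at h0
      simpa using Submodule.neg_mem _ h0
    have hvan : ∀ j : Fin P.card, u ((j:ℕ)+1) ∈ coinvRel g n := by
      refine vander_mem (coinvRel g n) P.card (fun j : Fin P.card => u ((j:ℕ)+1)) ?_
      intro t
      have := hrel (((t:ℕ):ℤ)+1)
      rw [← Fin.sum_univ_eq_sum_range
        (fun j => (((((t:ℕ):ℤ)+1 : ℤ):ℚ)) ^ (j+1) • u (j+1)) P.card] at this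
      convert this using 2 with j
      push_cast
      ring_nf
    have hup : u P.card ∈ coinvRel g n := by
      have := hvan ⟨P.card - 1, by omega⟩
      have heq : (P.card - 1) + 1 = P.card := by omega
      rwa [heq] at this
    have hupv : u P.card = PiTensorProduct.tprod ℚ f := by
      simp only [hudef, Finset.powersetCard_self, Finset.sum_singleton, hydef]
      congr 1
      funext k
      by_cases hk : k ∈ P
      · rw [Finset.piecewise_eq_of_mem _ _ _ hk]
        have hfk : f k = ea e0 := (Finset.mem_filter.1 hk).2
        simp [hddef, hfk]
      · rw [Finset.piecewise_eq_of_notMem _ _ _ hk]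
        have hfk : ¬ f k = ea e0 := fun h => hk (Finset.mem_filter.2 ⟨Finset.mem_univ _, h⟩)
        simp [hcdef, hfk]
    rwa [hupv] at hup
end
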